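/- A topological space is Polish if and only if it is quasi-Polish and regular. -/

import Mathlib

open TopologicalSpace Set Topology

/-- A Π⁰₂ set: a countable intersection of sets of the form (complement of open) ∪ open. -/
def IsPi02 {X : Type*} [TopologicalSpace X] (s : Set X) : Prop :=
  ∃ U V : ℕ → Set X, (∀ n, IsOpen (U n)) ∧ (∀ n, IsOpen (V n)) ∧
    s = ⋂ n, ((U n)ᶜ ∪ V n)

/-- A quasi-Polish space: homeomorphic to a Π⁰₂ subspace of 𝕊^ℕ,
where 𝕊 is the Sierpiński space (`Prop` with its topology in Mathlib). -/
def QuasiPolish (X : Type*) [TopologicalSpace X] : Prop :=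
  ∃ s : Set (ℕ → Prop), IsPi02 s ∧ Nonempty (X ≃ₜ s)

lemma polishSpace_iInter_isOpen {α : Type*} [TopologicalSpace α] [PolishSpace α]
    {U : ℕ → Set α} (hU : ∀ n, IsOpen (U n)) : PolishSpace ↥(⋂ n, U n) := by
  haveI : ∀ n, PolishSpace ↥(U n) := fun n => (hU n).polishSpace
  set C : Set (∀ n, ↥(U n)) := {f | ∀ n, (f n : α) = (f 0 : α)} with hC
  have hCc : IsClosed C := by
    have : C = ⋂ n, {f : ∀ n, ↥(U n) | (f n : α) = (f 0 : α)} := by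
      ext f; simp [hC]
    rw [this]
    exact isClosed_iInter fun n => isClosed_eq
      (continuous_subtype_val.comp (continuous_apply n))
      (continuous_subtype_val.comp (continuous_apply 0))
  haveI : PolishSpace ↥C := hCc.polishSpace
  let e : ↥(⋂ n, U n) ≃ₜ ↥C :=
    { toFun := fun x => ⟨fun n => ⟨x.1, mem_iInter.1 x.2 n⟩, fun n => rfl⟩
      invFun := fun f => ⟨(f.1 0 : α), mem_iInter.2 fun n => by
        have := f.2 n; rw [← this]; exact (f.1 n).2⟩
      left_inv := fun x => rfl
      right_inv := fun f => by
        ext n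
        · exact (f.2 n).symm
      continuous_toFun := by
        apply Continuous.subtype_mk
        exact continuous_pi fun n => continuous_subtype_val.subtype_mk _
      continuous_invFun := by
        apply Continuous.subtype_mk
        exact continuous_subtype_val.comp ((continuous_apply 0).comp continuous_subtype_val) }
  exact e.isClosedEmbedding.polishSpace

lemma IsGδ.polishSpace' {α : Type*} [TopologicalSpace α] [PolishSpace α]
    {s : Set α} (hs : IsGδ s) : PolishSpace ↥s := by
  obtain ⟨U, hU, rfl⟩ := isGδ_iff_eq_iInter_nat.1 hs
  exact polishSpace_iInter_isOpen hU

lemma polish_of_quasiPolish_regular {X : Type*} [TopologicalSpace X]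
    (hq : QuasiPolish X) (hr : RegularSpace X) : PolishSpace X := by
  classical
  obtain ⟨s, ⟨U, V, hUo, hVo, hsEq⟩, ⟨e⟩⟩ := hq
  haveI : SecondCountableTopology X := e.isEmbedding.secondCountableTopology
  haveI : T0Space X := e.isEmbedding.t0Space
  haveI : T3Space X := ⟨⟩
  letI : MetricSpace X := TopologicalSpace.metrizableSpaceMetric X
  set Y := UniformSpace.Completion X with hY
  haveI : SeparableSpace Y :=
    UniformSpace.Completion.denseRange_coe.separableSpace
      (UniformSpace.Completion.continuous_coe X)
  haveI : PolishSpace Y := inferInstance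
  set h : X → Y := ((↑) : X → Y) with hh
  have hemb : IsEmbedding h := UniformSpace.Completion.coe_isometry.isEmbedding
  -- the open sets A n of X corresponding to the Sierpinski coordinates, extended to Y
  have hA : ∀ n : ℕ, ∃ O : Set Y, IsOpen O ∧ h ⁻¹' O = {x : X | (e x : ℕ → Prop) n} := by
    intro n
    have hop : IsOpen {x : X | (e x : ℕ → Prop) n} := by
      have : Continuous fun x : X => (e x : ℕ → Prop) n :=
        (continuous_apply n).comp (continuous_subtype_val.comp e.continuous)
      exact continuous_Prop.1 this
    rw [hemb.isInducing.isOpen_iff] at hop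
    obtain ⟨O, hO, hOeq⟩ := hop
    exact ⟨O, hO, hOeq⟩
  choose O hOo hOeq using hA
  set F : Y → (ℕ → Prop) := fun y n => y ∈ O n with hF
  have hFc : Continuous F := continuous_pi fun n => continuous_Prop.2 (hOo n)
  have key : ∀ x : X, F (h x) = (e x : ℕ → Prop) := by
    intro x
    funext n
    have : (h x ∈ O n) = ((e x : ℕ → Prop) n) := by
      apply propext
      constructor
      · intro hx; have : x ∈ h ⁻¹' O n := hx; rwa [hOeq n] at this
      · intro hx; have : x ∈ {x : X | (e x : ℕ → Prop) n} := hx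
        rw [← hOeq n] at this; exact this
    exact this
  set T : Set Y := F ⁻¹' s with hT
  have hTg : IsGδ T := by
    rw [hT, hsEq]
    rw [preimage_iInter]
    refine IsGδ.iInter fun n => ?_
    rw [preimage_union, preimage_compl]
    exact IsGδ.union (((hUo n).preimage hFc).isClosed_compl.isGδ)
      (((hVo n).preimage hFc).isGδ)
  set G : ↥T → Y := fun y => h (e.symm ⟨F y.1, y.2⟩) with hG
  have hGc : Continuous G :=
    hemb.continuous.comp (e.symm.continuous.comp
      (Continuous.subtype_mk (hFc.comp continuous_subtype_val) _))
  have hA'c : IsClosed {y : ↥T | G y = y.1} := isClosed_eq hGc continuous_subtype_val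
  rw [isClosed_induced_iff] at hA'c
  obtain ⟨C, hCcl, hCeq⟩ := hA'c
  have hrange : range h = T ∩ C := by
    apply Subset.antisymm
    · rintro _ ⟨x, rfl⟩
      have hxT : h x ∈ T := by
        show F (h x) ∈ s
        rw [key x]; exact (e x).2
      refine ⟨hxT, ?_⟩
      have : (⟨h x, hxT⟩ : ↥T) ∈ Subtype.val ⁻¹' C := by
        rw [hCeq]
        show G ⟨h x, hxT⟩ = h x
        have hsym : e.symm ⟨F (h x), hxT⟩ = x := by
          apply e.injective
          rw [e.apply_symm_apply]
          exact Subtype.ext (key x)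
        calc G ⟨h x, hxT⟩ = h (e.symm ⟨F (h x), hxT⟩) := rfl
          _ = h x := by rw [hsym]
      exact this
    · rintro y ⟨hyT, hyC⟩
      have : (⟨y, hyT⟩ : ↥T) ∈ Subtype.val ⁻¹' C := hyC
      rw [hCeq] at this
      exact ⟨e.symm ⟨F y, hyT⟩, this⟩
  have hrg : IsGδ (range h) := hrange ▸ hTg.inter hCcl.isGδ
  haveI : PolishSpace ↥(range h) := hrg.polishSpace'
  exact hemb.toHomeomorph.isClosedEmbedding.polishSpace

lemma isPi02_of_encodable {α : Type*} [TopologicalSpace α] {C : Type*} [Encodable C] {s : Set α}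
    {U V : C → Set α} (hU : ∀ c, IsOpen (U c)) (hV : ∀ c, IsOpen (V c))
    (h : s = ⋂ c, ((U c)ᶜ ∪ V c)) : IsPi02 s := by
  refine ⟨fun n => (Encodable.decode (α := C) n).elim ∅ U,
    fun n => (Encodable.decode (α := C) n).elim ∅ V, ?_, ?_, ?_⟩
  · intro n; cases hd : Encodable.decode (α := C) n <;> simp [hd, hU, isOpen_empty]
  · intro n; cases hd : Encodable.decode (α := C) n <;> simp [hd, hV, isOpen_empty]
  · rw [h]; ext p
    simp only [mem_iInter, mem_union, mem_compl_iff]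
    constructor
    · intro H n
      cases hd : Encodable.decode (α := C) n with
      | none => simp [hd]
      | some c => simpa [hd] using H c
    · intro H c
      have := H (Encodable.encode c)
      rwa [Encodable.encodek] at this

lemma quasiPolish_of_polish {X : Type*} [TopologicalSpace X] [h : PolishSpace X] :
    QuasiPolish X := by
  classical
  rcases isEmpty_or_nonempty X with hX | hX
  · refine ⟨∅, ⟨fun _ => univ, fun _ => ∅, fun _ => isOpen_univ, fun _ => isOpen_empty,
      by simp [iInter_const]⟩, ⟨?_⟩⟩
    exact { toEquiv := Equiv.equivOfIsEmpty _ _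
            continuous_toFun := continuous_empty_function _
            continuous_invFun := continuous_empty_function _ }
  · letI := upgradeIsCompletelyMetrizable X
    obtain ⟨u, hu⟩ := TopologicalSpace.exists_dense_seq X
    set q : ℕ ≃ ℕ × ℕ := (Denumerable.eqv (ℕ × ℕ)).symm with hq
    set c : ℕ → X := fun n => u (q n).1 with hc
    set r : ℕ → ℝ := fun n => (2⁻¹ : ℝ) ^ (q n).2 with hrdef
    have hrpos : ∀ n, 0 < r n := fun n => pow_pos (by norm_num) _
    have hfind : ∀ (x : X) (ε : ℝ), 0 < ε → ∃ n, dist x (c n) < r n ∧ r n ≤ ε := by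
      intro x ε hε
      obtain ⟨j, hj⟩ := exists_pow_lt_of_lt_one hε (by norm_num : (2⁻¹ : ℝ) < 1)
      obtain ⟨i, hi⟩ := hu.exists_dist_lt x (pow_pos (by norm_num : (0:ℝ) < 2⁻¹) j)
      refine ⟨q.symm (i, j), ?_, ?_⟩
      · simpa [hc, hrdef, q.apply_symm_apply] using hi
      · simp only [hrdef, q.apply_symm_apply]
        exact hj.le
    set B : ℕ → Set X := fun n => Metric.ball (c n) (r n) with hB
    set e : X → ℕ → Prop := fun x n => x ∈ B n with he
    have heopen : ∀ n, IsOpen {p : ℕ → Prop | p n} := fun n =>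
      continuous_Prop.1 (continuous_apply n)
    have hecont : Continuous e := continuous_pi fun n => continuous_Prop.2 Metric.isOpen_ball
    have hbasis : ∀ (x : X) (O : Set X), IsOpen O → x ∈ O → ∃ n, x ∈ B n ∧ B n ⊆ O := by
      intro x O hO hxO
      obtain ⟨ε, hε, hball⟩ := Metric.isOpen_iff.1 hO x hxO
      obtain ⟨n, hn1, hn2⟩ := hfind x (ε / 2) (by linarith)
      refine ⟨n, Metric.mem_ball.2 hn1, fun y hy => hball ?_⟩
      have : dist y x ≤ dist y (c n) + dist (c n) x := dist_triangle _ _ _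
      rw [dist_comm (c n) x] at this
      have hyc : dist y (c n) < r n := Metric.mem_ball.1 hy
      exact Metric.mem_ball.2 (by linarith)
    have hinj : Function.Injective e := by
      intro x y hxy
      by_contra hne
      have hd : 0 < dist x y := dist_pos.2 hne
      obtain ⟨n, hn1, hn2⟩ := hfind x (dist x y / 2) (by linarith)
      have hxB : x ∈ B n := Metric.mem_ball.2 hn1
      have hyB : y ∈ B n := by
        have h' : e x n = e y n := by rw [hxy]
        have h'' : (x ∈ B n) = (y ∈ B n) := h'
        exact h'' ▸ hxB
      have h1 : dist y (c n) < r n := Metric.mem_ball.1 hyB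
      have : dist x y ≤ dist x (c n) + dist (c n) y := dist_triangle _ _ _
      rw [dist_comm (c n) y] at this
      linarith
    have hind : IsInducing e := by
      rw [isInducing_iff_nhds]
      intro x
      refine le_antisymm (Filter.tendsto_iff_comap.1 (hecont.tendsto x)) ?_
      intro s hs
      obtain ⟨O, hOsub, hOopen, hxO⟩ := mem_nhds_iff.1 hs
      obtain ⟨n, hxB, hBO⟩ := hbasis x O hOopen hxO
      refine Filter.mem_comap.2 ⟨{p | p n}, (heopen n).mem_nhds hxB, ?_⟩
      intro y hy
      exact hOsub (hBO hy)
    have hemb : IsEmbedding e := ⟨hind, hinj⟩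
    -- the Π⁰₂ set of "good" points of Sierpiński space
    set S : Set (ℕ → Prop) := {p | (∃ n, p n) ∧
      (∀ n m j, p n → p m → ∃ k, p k ∧
        Metric.closedBall (c k) (r k) ⊆ B n ∩ B m ∧ r k ≤ (2⁻¹ : ℝ) ^ j) ∧
      (∀ n k, Metric.closedBall (c k) (r k) ⊆ B n → p k → p n)} with hS
    have hSrange : S = Set.range e := by
      apply Subset.antisymm
      · -- S ⊆ range e
        rintro p ⟨h1, h2, h3⟩
        have step : ∀ (m j : ℕ), p m → ∃ k, p k ∧
            Metric.closedBall (c k) (r k) ⊆ B m ∧ r k ≤ (2⁻¹ : ℝ) ^ j := by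
          intro m j pm
          obtain ⟨k, pk, hsub, hrk⟩ := h2 m m j pm pm
          exact ⟨k, pk, by simpa [inter_self] using hsub, hrk⟩
        obtain ⟨n₀, pn₀⟩ := h1
        choose f hf1 hf2 hf3 using step
        let K : ℕ → {m : ℕ // p m} := fun j =>
          Nat.rec ⟨f n₀ 0 pn₀, hf1 n₀ 0 pn₀⟩ (fun j prev => ⟨f prev.1 (j+1) prev.2, hf1 _ _ _⟩) j
        have hK0 : ∀ j, r (K j).1 ≤ (2⁻¹ : ℝ) ^ j := by
          intro j
          cases j with
          | zero => exact hf3 n₀ 0 pn₀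
          | succ j => exact hf3 _ _ _
        have hKnest : ∀ j, Metric.closedBall (c (K (j+1)).1) (r (K (j+1)).1) ⊆ B (K j).1 :=
          fun j => hf2 _ _ _
        have hdist : ∀ j, dist (c (K j).1) (c (K (j+1)).1) ≤ 1 * (2⁻¹ : ℝ) ^ j := by
          intro j
          have hc1 : c (K (j+1)).1 ∈ Metric.closedBall (c (K (j+1)).1) (r (K (j+1)).1) :=
            Metric.mem_closedBall_self (hrpos _).le
          have hmem := hKnest j hc1
          rw [dist_comm]
          calc dist (c (K (j+1)).1) (c (K j).1) ≤ r (K j).1 := (Metric.mem_ball.1 hmem).le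
            _ ≤ 1 * (2⁻¹ : ℝ) ^ j := by simpa using hK0 j
        have hcauchy : CauchySeq fun j => c (K j).1 :=
          cauchySeq_of_le_geometric 2⁻¹ 1 (by norm_num) hdist
        obtain ⟨x, hx⟩ := cauchySeq_tendsto_of_complete hcauchy
        have hnested : ∀ j m, j ≤ m → Metric.closedBall (c (K m).1) (r (K m).1) ⊆
            Metric.closedBall (c (K j).1) (r (K j).1) := by
          intro j m hjm
          induction m, hjm using Nat.le_induction with
          | base => exact Subset.rfl
          | succ m hjm ih =>
            exact ((hKnest m).trans Metric.ball_subset_closedBall).trans ih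
        have hxmem : ∀ j, x ∈ Metric.closedBall (c (K j).1) (r (K j).1) := by
          intro j
          apply Metric.isClosed_closedBall.mem_of_tendsto hx
          filter_upwards [Filter.eventually_ge_atTop j] with m hm
          exact hnested j m hm (Metric.mem_closedBall_self (hrpos _).le)
        have claim1 : ∀ n, p n → x ∈ B n := by
          intro n pn
          obtain ⟨k', pk', hsub'⟩ : ∃ k', p k' ∧ Metric.closedBall (c k') (r k') ⊆ B n :=
            ⟨f n 0 pn, hf1 n 0 pn, hf2 n 0 pn⟩
          have hxk : x ∈ Metric.closedBall (c k') (r k') := by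
            rw [Metric.mem_closedBall]
            have hall : ∀ j : ℕ, dist x (c k') < r k' + ((2⁻¹ : ℝ) ^ j + (2⁻¹ : ℝ) ^ j) := by
              intro j
              obtain ⟨k'', pk'', hsub'', -⟩ := h2 k' (K j).1 j pk' (K j).2
              have hck'' : c k'' ∈ B k' ∩ B (K j).1 :=
                hsub'' (Metric.mem_closedBall_self (hrpos _).le)
              have h1' : dist (c k'') (c k') < r k' := Metric.mem_ball.1 hck''.1
              have h2' : dist (c k'') (c (K j).1) < r (K j).1 := Metric.mem_ball.1 hck''.2
              have h3' : dist x (c (K j).1) ≤ r (K j).1 := Metric.mem_closedBall.1 (hxmem j)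
              have h4' : r (K j).1 ≤ (2⁻¹ : ℝ) ^ j := hK0 j
              have htri := dist_triangle4 x (c (K j).1) (c k'') (c k')
              have hcomm : dist (c (K j).1) (c k'') = dist (c k'') (c (K j).1) := dist_comm _ _
              linarith
            by_contra hgt
            push_neg at hgt
            obtain ⟨j, hj⟩ := exists_pow_lt_of_lt_one
              (show (0:ℝ) < (dist x (c k') - r k') / 2 by linarith)
              (by norm_num : (2⁻¹ : ℝ) < 1)
            have := hall j
            linarith
          exact hsub' hxk
        have claim2 : ∀ n, x ∈ B n → p n := by
          intro n hxn
          have hε : 0 < r n - dist x (c n) := by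
            have := Metric.mem_ball.1 hxn; linarith
          obtain ⟨j, hj⟩ := exists_pow_lt_of_lt_one
            (show (0:ℝ) < (r n - dist x (c n)) / 3 by linarith)
            (by norm_num : (2⁻¹ : ℝ) < 1)
          have hincl : Metric.closedBall (c (K j).1) (r (K j).1) ⊆ B n := by
            intro y hy
            have h1' : dist y (c (K j).1) ≤ r (K j).1 := Metric.mem_closedBall.1 hy
            have h2' : dist x (c (K j).1) ≤ r (K j).1 := Metric.mem_closedBall.1 (hxmem j)
            have h3' : r (K j).1 ≤ (2⁻¹ : ℝ) ^ j := hK0 j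
            have htri := dist_triangle4 y (c (K j).1) x (c n)
            have hcomm : dist (c (K j).1) x = dist x (c (K j).1) := dist_comm _ _
            exact Metric.mem_ball.2 (by linarith)
          exact h3 n (K j).1 hincl (K j).2
        exact ⟨x, (funext fun n => propext ⟨claim2 n, claim1 n⟩ : e x = p)⟩
      · -- range e ⊆ S
        rintro _ ⟨x, rfl⟩
        refine ⟨?_, ?_, ?_⟩
        · obtain ⟨n, hn1, -⟩ := hfind x 1 one_pos
          exact ⟨n, Metric.mem_ball.2 hn1⟩
        · intro n m j hxn hxm
          have hdn : dist x (c n) < r n := Metric.mem_ball.1 (show x ∈ B n from hxn)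
          have hdm : dist x (c m) < r m := Metric.mem_ball.1 (show x ∈ B m from hxm)
          have hεpos : 0 < min (min ((r n - dist x (c n)) / 3) ((r m - dist x (c m)) / 3))
              ((2⁻¹ : ℝ) ^ j) :=
            lt_min (lt_min (by linarith) (by linarith)) (pow_pos (by norm_num) j)
          obtain ⟨k, hk1, hk2⟩ := hfind x _ hεpos
          refine ⟨k, Metric.mem_ball.2 hk1, ?_, hk2.trans (min_le_right _ _)⟩
          have hkn : r k ≤ (r n - dist x (c n)) / 3 :=
            hk2.trans ((min_le_left _ _).trans (min_le_left _ _))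
          have hkm : r k ≤ (r m - dist x (c m)) / 3 :=
            hk2.trans ((min_le_left _ _).trans (min_le_right _ _))
          intro y hy
          have hy' : dist y (c k) ≤ r k := Metric.mem_closedBall.1 hy
          constructor
          · refine Metric.mem_ball.2 ?_
            have htri := dist_triangle4 y (c k) x (c n)
            have hcomm : dist (c k) x = dist x (c k) := dist_comm _ _
            linarith
          · refine Metric.mem_ball.2 ?_
            have htri := dist_triangle4 y (c k) x (c m)
            have hcomm : dist (c k) x = dist x (c k) := dist_comm _ _
            linarith
        · intro n k hcl hxk
          exact hcl (Metric.ball_subset_closedBall (show x ∈ B k from hxk))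
    have hSpi : IsPi02 S := by
      set Uc : Unit ⊕ (ℕ × ℕ × ℕ) ⊕ (ℕ × ℕ) → Set (ℕ → Prop) := fun c' =>
        match c' with
        | .inl _ => univ
        | .inr (.inl (n, m, _)) => {p | p n} ∩ {p | p m}
        | .inr (.inr (n, k)) =>
            if Metric.closedBall (c k) (r k) ⊆ B n then {p | p k} else ∅ with hUc
      set Vc : Unit ⊕ (ℕ × ℕ × ℕ) ⊕ (ℕ × ℕ) → Set (ℕ → Prop) := fun c' =>
        match c' with
        | .inl _ => ⋃ n, {p | p n}
        | .inr (.inl (n, m, j)) =>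
            ⋃ (k : ℕ) (_ : Metric.closedBall (c k) (r k) ⊆ B n ∩ B m ∧ r k ≤ (2⁻¹ : ℝ) ^ j),
              {p | p k}
        | .inr (.inr (n, _)) => {p | p n} with hVc
      have hUo : ∀ c', IsOpen (Uc c') := by
        rintro (u | ⟨n, m, j⟩ | ⟨n, k⟩)
        · exact isOpen_univ
        · exact (heopen n).inter (heopen m)
        · show IsOpen (if Metric.closedBall (c k) (r k) ⊆ B n then {p : ℕ → Prop | p k} else ∅)
          split_ifs
          · exact heopen k
          · exact isOpen_empty
      have hVo : ∀ c', IsOpen (Vc c') := by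
        rintro (u | ⟨n, m, j⟩ | ⟨n, k⟩)
        · exact isOpen_iUnion fun n => heopen n
        · exact isOpen_iUnion fun k => isOpen_iUnion fun _ => heopen k
        · exact heopen n
      have hEq : S = ⋂ c', ((Uc c')ᶜ ∪ Vc c') := by
        ext p
        simp only [mem_iInter]
        constructor
        · rintro ⟨h1, h2, h3⟩ c'
          rcases c' with u | ⟨n, m, j⟩ | ⟨n, k⟩
          · refine Or.inr ?_
            obtain ⟨n, hn⟩ := h1
            exact mem_iUnion.2 ⟨n, hn⟩
          · by_cases hnm : p n ∧ p m
            · refine Or.inr ?_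
              obtain ⟨k, pk, hsub, hrk⟩ := h2 n m j hnm.1 hnm.2
              exact mem_iUnion₂.2 ⟨k, ⟨hsub, hrk⟩, pk⟩
            · exact Or.inl fun hmem => hnm ⟨hmem.1, hmem.2⟩
          · by_cases hcl : Metric.closedBall (c k) (r k) ⊆ B n
            · by_cases hpk : p k
              · exact Or.inr (h3 n k hcl hpk)
              · refine Or.inl ?_
                show p ∉ (if Metric.closedBall (c k) (r k) ⊆ B n
                  then {p : ℕ → Prop | p k} else ∅)
                rw [if_pos hcl]
                exact hpk
            · refine Or.inl ?_
              show p ∉ (if Metric.closedBall (c k) (r k) ⊆ B n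
                then {p : ℕ → Prop | p k} else ∅)
              rw [if_neg hcl]
              exact notMem_empty p
        · intro hp
          refine ⟨?_, ?_, ?_⟩
          · rcases hp (Sum.inl ()) with h | h
            · exact absurd (mem_univ p) h
            · exact mem_iUnion.1 h
          · intro n m j pn pm
            rcases hp (Sum.inr (Sum.inl (n, m, j))) with h | h
            · exact absurd ⟨pn, pm⟩ h
            · obtain ⟨k, ⟨hsub, hrk⟩, pk⟩ := mem_iUnion₂.1 h
              exact ⟨k, pk, hsub, hrk⟩
          · intro n k hcl pk
            rcases hp (Sum.inr (Sum.inr (n, k))) with h | h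
            · refine absurd ?_ h
              show p ∈ (if Metric.closedBall (c k) (r k) ⊆ B n
                then {p : ℕ → Prop | p k} else ∅)
              rw [if_pos hcl]
              exact pk
            · exact h
      exact isPi02_of_encodable hUo hVo hEq
    exact ⟨S, hSpi, ⟨hemb.toHomeomorph.trans (Homeomorph.setCongr hSrange.symm)⟩⟩

theorem polish_iff_quasiPolish_regular {X : Type*} [TopologicalSpace X] :
    PolishSpace X ↔ QuasiPolish X ∧ RegularSpace X := by
  constructor
  · intro h
    refine ⟨quasiPolish_of_polish, ?_⟩
    letI := upgradeIsCompletelyMetrizable X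
    infer_instance
  · rintro ⟨hq, hr⟩
    exact polish_of_quasiPolish_regular hq hr
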